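/- Fix integers 2 ≤ ℓ < k. For every 0 < α < 1/(12k²) there exists, for each sufficiently large n, a k-graph H on n vertices with minimum ℓ-degree δ_ℓ(H) ≥ α·C(n, k-ℓ) such that for every c > ℓ/⌊1/(4αk)⌋, if p < n^{-(k-ℓ)-c} then with high probability the randomly perturbed k-graph H_p^+ does not contain a Hamilton ℓ-cycle. -/

import Mathlib

set_option maxHeartbeats 1600000


open MeasureTheory Filter
open scoped ENNReal

/-- The Bernoulli measure on `Bool` with success probability `p` (truncated at 1). -/
noncomputable def bern (p : ℝ≥0∞) : Measure Bool :=
  (PMF.bernoulli (min p 1).toNNReal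
    (by simpa using ENNReal.toNNReal_mono ENNReal.one_ne_top (min_le_right p 1))).toMeasure

/-- The binomial random `k`-graph `H^{(k)}_{n,p}`. -/
noncomputable def randomHypergraph (n k : ℕ) (p : ℝ≥0∞) :
    Measure ({s : Finset (Fin n) // s.card = k} → Bool) :=
  Measure.pi fun _ => bern p

/-- The edge set of the outcome `ω` of the random `k`-graph. -/
def edgeSet {n k : ℕ} (ω : {s : Finset (Fin n) // s.card = k} → Bool) :
    Finset (Finset (Fin n)) :=
  (Finset.univ.filter (fun s : {s : Finset (Fin n) // s.card = k} => ω s = true)).image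
    Subtype.val

/-- `G` contains a Hamilton `ℓ`-cycle: there is a cyclic ordering `v` of the `n`
vertices such that each of the `n/(k-ℓ)` intervals of `k` consecutive vertices
(starting at the multiples of `k-ℓ`, taken cyclically) is an edge of `G`. -/
def HasHamiltonCycle (k ℓ n : ℕ) (G : Finset (Finset (Fin n))) : Prop :=
  (k - ℓ) ∣ n ∧
  ∃ v : ℕ → Fin n, Set.InjOn v (Finset.range n) ∧
    (Finset.range n).image v = Finset.univ ∧
    ∀ j < n / (k - ℓ),
      (Finset.range k).image (fun i => v ((j * (k - ℓ) + i) % n)) ∈ G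

section Aux

instance (p : ℝ≥0∞) : IsProbabilityMeasure (bern p) :=
  PMF.toMeasure.isProbabilityMeasure _

lemma bern_true (p : ℝ≥0∞) : bern p {true} = min p 1 := by
  rw [bern, PMF.toMeasure_apply_singleton _ _ (measurableSet_singleton _)]
  show (((min p 1).toNNReal : NNReal) : ℝ≥0∞) = min p 1
  exact ENNReal.coe_toNNReal (ne_top_of_le_ne_top ENNReal.one_ne_top (min_le_right p 1))

lemma cylinder_measure {ι : Type*} [Fintype ι] (p : ℝ≥0∞) (T : Finset ι) :
    (Measure.pi fun _ : ι => bern p) {ω | ∀ i ∈ T, ω i = true} =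
      (min p 1) ^ T.card := by
  classical
  have h1 : {ω : ι → Bool | ∀ i ∈ T, ω i = true} =
      Set.pi Set.univ (fun i => if i ∈ T then {true} else Set.univ) := by
    ext ω
    simp only [Set.mem_setOf_eq, Set.mem_pi, Set.mem_univ, forall_true_left]
    constructor
    · intro h i
      by_cases hi : i ∈ T <;> simp [hi, h i]
    · intro h i hi
      have := h i
      simpa [hi] using this
  rw [h1, Measure.pi_pi]
  have h2 : ∀ i, bern p (if i ∈ T then ({true} : Set Bool) else Set.univ)
      = if i ∈ T then min p 1 else 1 := by
    intro i; by_cases hi : i ∈ T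
    · rw [if_pos hi, if_pos hi, bern_true]
    · rw [if_neg hi, if_neg hi, measure_univ]
  simp only [h2]
  rw [Finset.prod_ite_mem Finset.univ T (fun _ => min p 1), Finset.univ_inter,
    Finset.prod_const]

lemma mod_add_right_cancel {n x y i : ℕ} (h : (x + i) % n = (y + i) % n) :
    x % n = y % n :=
  Nat.ModEq.add_right_cancel' i h

lemma start_eq {n k x y : ℕ} (hk : 0 < k) (hkn : k < n) (hx : x < n) (hy : y < n)
    (hxy : ∀ i < k, ∃ i' < k, (x + i) % n = (y + i') % n)
    (hyx : ∀ i < k, ∃ i' < k, (y + i) % n = (x + i') % n) : x = y := by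
  obtain ⟨i, hi, hix⟩ := hxy 0 hk
  rcases Nat.eq_zero_or_pos i with h0 | h0
  · subst h0
    have := hix
    rw [Nat.add_zero, Nat.add_zero, Nat.mod_eq_of_lt hx, Nat.mod_eq_of_lt hy] at this
    exact this
  · exfalso
    obtain ⟨i'', hi'', h2⟩ := hyx (i - 1) (by omega)
    have h3 : (y + i) % n = (x + (i'' + 1)) % n := by
      have := congrArg (fun t => (t + 1) % n) h2
      simp only [Nat.mod_add_mod] at this
      have e1 : y + (i - 1) + 1 = y + i := by omega
      rw [e1] at this
      rw [this, Nat.add_assoc]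
    have h4 : (x + 0) % n = (x + (i'' + 1)) % n := by rw [hix, h3]
    have h5 : 0 % n = (i'' + 1) % n := Nat.ModEq.add_left_cancel' x h4
    rw [Nat.zero_mod, Nat.mod_eq_of_lt (by omega : i'' + 1 < n)] at h5
    omega

lemma mult_bound {n d k w : ℕ} (hd : 0 < d) (hdn : d ∣ n) (hkn : k ≤ n) :
    ((Finset.range (n / d)).filter (fun j => ∃ i < k, (j * d + i) % n = w)).card
      ≤ k / d + 1 := by
  classical
  have key : ∀ j ∈ (Finset.range (n / d)).filter
      (fun j => ∃ i < k, (j * d + i) % n = w),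
      ∃ i, i < k ∧ (j * d + i) % n = w ∧ (w + (n - j * d)) % n = i := by
    intro j hj
    simp only [Finset.mem_filter, Finset.mem_range] at hj
    obtain ⟨hjlt, i, hik, hiw⟩ := hj
    have hjd : j * d ≤ n - d := by
      obtain ⟨t, rfl⟩ := hdn
      have : j + 1 ≤ t := by
        have := hjlt
        rwa [Nat.mul_div_cancel_left t hd] at this
      calc j * d ≤ (t - 1) * d := Nat.mul_le_mul_right d (by omega)
        _ = d * t - d := by rw [Nat.sub_one_mul, Nat.mul_comm]
    have hjdn : j * d ≤ n := le_trans hjd (Nat.sub_le _ _)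
    refine ⟨i, hik, hiw, ?_⟩
    have : (w + (n - j * d)) % n = ((j * d + i) % n + (n - j * d)) % n := by rw [hiw]
    rw [this, Nat.mod_add_mod]
    have e : j * d + i + (n - j * d) = i + n := by omega
    rw [e, Nat.add_mod_right, Nat.mod_eq_of_lt (by omega)]
  rw [show k / d + 1 = (Finset.range (k / d + 1)).card from (Finset.card_range _).symm]
  apply Finset.card_le_card_of_injOn (fun j => ((w + (n - j * d)) % n) / d)
  · intro j hj
    obtain ⟨i, hik, -, hieq⟩ := key j hj
    simp only [Finset.coe_range, Set.mem_Iio, Finset.mem_range, hieq]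
    have : i / d ≤ k / d := Nat.div_le_div_right (le_of_lt hik)
    omega
  · intro j hj j' hj' heq
    obtain ⟨i, hik, hiw, hieq⟩ := key j (Finset.mem_coe.mp hj)
    obtain ⟨i', hik', hiw', hieq'⟩ := key j' (Finset.mem_coe.mp hj')
    simp only [hieq, hieq'] at heq
    -- show i = i'
    have hmod : ∀ jj : ℕ, jj ∈ (Finset.range (n / d)).filter
        (fun j => ∃ i < k, (j * d + i) % n = w) →
        ((w + (n - jj * d)) % n) % d = w % d := by
      intro jj hjj
      simp only [Finset.mem_filter, Finset.mem_range] at hjj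
      rw [Nat.mod_mod_of_dvd _ hdn]
      obtain ⟨t, ht⟩ := hdn
      have hjjd : jj * d ≤ n := by
        have : jj ≤ t := by
          have := hjj.1; rw [ht, Nat.mul_div_cancel_left t hd] at this; omega
        calc jj * d ≤ t * d := Nat.mul_le_mul_right d this
          _ = n := by rw [ht, Nat.mul_comm]
      obtain ⟨s, hs⟩ : d ∣ (n - jj * d) := by
        exact Nat.dvd_sub ⟨t, ht⟩ (dvd_mul_left d jj)
      rw [hs, Nat.add_mul_mod_self_left]
    have hii : i = i' := by
      have h1 := hmod j hj
      have h2 := hmod j' hj'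
      rw [hieq] at h1; rw [hieq'] at h2
      have e1 : d * (i / d) + i % d = i := Nat.div_add_mod i d
      have e2 : d * (i' / d) + i' % d = i' := Nat.div_add_mod i' d
      rw [h1, heq] at e1; rw [h2] at e2
      exact e1.symm.trans e2
    subst hii
    -- (j*d + i) % n = (j'*d + i) % n
    have hmn : (j * d) % n = (j' * d) % n := mod_add_right_cancel (by rw [hiw, hiw'])
    simp only [Finset.coe_filter, Finset.mem_range, Set.mem_setOf_eq] at hj hj'
    obtain ⟨t, ht⟩ := hdn
    have htd : n / d = t := by rw [ht, Nat.mul_div_cancel_left t hd]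
    rw [htd] at hj hj'
    have h1 : j * d < n := by
      rw [ht, Nat.mul_comm d t]
      exact Nat.mul_lt_mul_of_lt_of_le hj.1 (le_refl d) hd
    have h2 : j' * d < n := by
      rw [ht, Nat.mul_comm d t]
      exact Nat.mul_lt_mul_of_lt_of_le hj'.1 (le_refl d) hd
    rw [Nat.mod_eq_of_lt h1, Nat.mod_eq_of_lt h2] at hmn
    exact Nat.eq_of_mul_eq_mul_right hd hmn

lemma jd_lt {n d j : ℕ} (hd : 0 < d) (hdn : d ∣ n) (hj : j < n / d) : j * d < n := by
  obtain ⟨t, rfl⟩ := hdn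
  rw [Nat.mul_div_cancel_left t hd] at hj
  rw [Nat.mul_comm d t]
  exact Nat.mul_lt_mul_of_lt_of_le hj (le_refl d) hd

lemma arc_inj {n d k : ℕ} (hd : 0 < d) (hdn : d ∣ n) (hk : 0 < k) (hkn : k < n)
    {j j' : ℕ} (hj : j < n / d) (hj' : j' < n / d)
    (h : (Finset.range k).image (fun i => (j * d + i) % n)
       = (Finset.range k).image (fun i => (j' * d + i) % n)) : j = j' := by
  have hx := jd_lt hd hdn hj
  have hy := jd_lt hd hdn hj'
  have h1 : ∀ i < k, ∃ i' < k, (j * d + i) % n = (j' * d + i') % n := by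
    intro i hi
    have : (j * d + i) % n ∈ (Finset.range k).image (fun i => (j' * d + i) % n) := by
      rw [← h]; exact Finset.mem_image_of_mem _ (Finset.mem_range.mpr hi)
    simp only [Finset.mem_image, Finset.mem_range] at this
    obtain ⟨i', hi', he⟩ := this
    exact ⟨i', hi', he.symm⟩
  have h2 : ∀ i < k, ∃ i' < k, (j' * d + i) % n = (j * d + i') % n := by
    intro i hi
    have : (j' * d + i) % n ∈ (Finset.range k).image (fun i => (j * d + i) % n) := by
      rw [h]; exact Finset.mem_image_of_mem _ (Finset.mem_range.mpr hi)
    simp only [Finset.mem_image, Finset.mem_range] at this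
    obtain ⟨i', hi', he⟩ := this
    exact ⟨i', hi', he.symm⟩
  exact Nat.eq_of_mul_eq_mul_right hd (start_eq hk hkn hx hy h1 h2)

lemma pow_ratio {M D r : ℕ} (hD : D ≤ M) (h3 : 3 * (r * D) ≤ M) (hM : 0 < M) :
    2 * (M : ℝ) ^ r ≤ 3 * ((M - D : ℕ) : ℝ) ^ r := by
  have hMpos : (0 : ℝ) < M := by exact_mod_cast hM
  set x : ℝ := (D : ℝ) / M with hxdef
  have hx0 : 0 ≤ x := div_nonneg (Nat.cast_nonneg _) hMpos.le
  have hx1 : x ≤ 1 := by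
    rw [div_le_one hMpos]; exact_mod_cast hD
  have hbern : 1 + (r : ℝ) * (-x) ≤ (1 + (-x)) ^ r := by
    apply one_add_mul_le_pow; linarith
  have hrx : (r : ℝ) * x ≤ 1 / 3 := by
    rw [hxdef, mul_div_assoc'] at *
    rw [div_le_div_iff₀ hMpos (by norm_num : (0:ℝ) < 3)]
    have : ((3 * (r * D) : ℕ) : ℝ) ≤ (M : ℕ) := by exact_mod_cast h3
    push_cast at this
    linarith
  have hcast : ((M - D : ℕ) : ℝ) = (1 + (-x)) * M := by
    rw [Nat.cast_sub hD, hxdef]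
    have hne : (M:ℝ) ≠ 0 := ne_of_gt hMpos
    field_simp
    ring
  rw [hcast, mul_pow]
  have hMr : (0:ℝ) ≤ (M:ℝ)^r := by positivity
  have h23 : (2:ℝ)/3 ≤ (1 + (-x))^r := by
    calc (2:ℝ)/3 ≤ 1 + (r:ℝ)*(-x) := by linarith
    _ ≤ _ := hbern
  calc 2 * (M:ℝ)^r = 3 * ((2/3) * (M:ℝ)^r) := by ring
  _ ≤ 3 * ((1 + (-x))^r * (M:ℝ)^r) := by
      apply mul_le_mul_of_nonneg_left _ (by norm_num)
      exact mul_le_mul_of_nonneg_right h23 hMr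

lemma choose_compare {M M' r : ℕ} (hrM' : r ≤ M') (hMM : M' ≤ M)
    (h3 : 3 * (r * (M - M' + r)) ≤ M) (hM0 : 0 < M) :
    2 * (M.choose r : ℝ) ≤ 3 * (M'.choose r : ℝ) := by
  rcases Nat.eq_zero_or_pos r with rfl | hr
  · simp; norm_num
  · set D := M - (M' + 1 - r) with hDdef
    have hD : D ≤ M := Nat.sub_le _ _
    have hMD : M - D = M' + 1 - r := by omega
    have h3' : 3 * (r * D) ≤ M := by
      have : r * D ≤ r * (M - M' + r) := Nat.mul_le_mul_left r (by omega)
      omega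
    have hfac : (0:ℝ) < (r.factorial : ℝ) := by exact_mod_cast r.factorial_pos
    calc 2 * (M.choose r : ℝ) ≤ 2 * ((M:ℝ)^r / r.factorial) := by
          have := Nat.choose_le_pow_div (α := ℝ) r M
          linarith
    _ = (2 * (M:ℝ)^r) / r.factorial := by ring
    _ ≤ (3 * (((M - D : ℕ)):ℝ)^r) / r.factorial := by
          have := pow_ratio hD h3' hM0
          exact div_le_div_of_nonneg_right this hfac.le
    _ = 3 * ((((M' + 1 - r : ℕ)):ℝ)^r / r.factorial) := by rw [hMD]; ring
    _ ≤ 3 * (M'.choose r : ℝ) := by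
          have := Nat.pow_le_choose (α := ℝ) r M'
          have h2 : (((M' + 1 - r : ℕ) ^ r : ℕ) : ℝ) = (((M' + 1 - r : ℕ)):ℝ)^r := by
            push_cast; ring
          linarith

lemma degree_count {n k ℓ a : ℕ} (hℓk : ℓ < k) (S : Finset (Fin n)) (hS : S.card = ℓ) :
    (((Finset.univ.filter (fun x : Fin n => (x : ℕ) < a)) \ S).card *
      ((Finset.univ \ ((Finset.univ.filter (fun x : Fin n => (x : ℕ) < a)) ∪ S)).card.choose
        (k - ℓ - 1)))
    ≤ (((Finset.univ.filter (fun e : Finset (Fin n) =>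
          e.card = k ∧ ∃ x ∈ e, (x : ℕ) < a)).filter (fun e => S ⊆ e)).card) := by
  classical
  set A : Finset (Fin n) := Finset.univ.filter (fun x : Fin n => (x : ℕ) < a) with hA
  set R : Finset (Fin n) := Finset.univ \ (A ∪ S) with hR
  have hkey : ∀ x ∈ A \ S, ∀ T ∈ R.powersetCard (k - ℓ - 1),
      (insert x (S ∪ T) ∩ (A \ S) = {x}) ∧ (insert x (S ∪ T) \ (A ∪ S) = T) ∧
      (insert x (S ∪ T)).card = k ∧ (∃ y ∈ insert x (S ∪ T), (y : ℕ) < a) ∧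
      S ⊆ insert x (S ∪ T) := by
    intro x hx T hT
    rw [Finset.mem_powersetCard] at hT
    obtain ⟨hTR, hTcard⟩ := hT
    rw [Finset.mem_sdiff] at hx
    obtain ⟨hxA, hxS⟩ := hx
    have hTA : ∀ y ∈ T, y ∉ A ∧ y ∉ S := by
      intro y hy
      have := hTR hy
      rw [hR, Finset.mem_sdiff, Finset.mem_union] at this
      tauto
    have hxT : x ∉ T := fun h => (hTA x h).1 hxA
    constructor
    · ext y
      simp only [Finset.mem_inter, Finset.mem_insert, Finset.mem_union, Finset.mem_sdiff,
        Finset.mem_singleton]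
      constructor
      · rintro ⟨h1 | h2 | h3, hyA, hyS⟩
        · exact h1
        · exact absurd h2 hyS
        · exact absurd hyA (hTA y h3).1
      · rintro rfl; exact ⟨Or.inl rfl, hxA, hxS⟩
    refine ⟨?_, ?_, ?_, ?_⟩
    · ext y
      simp only [Finset.mem_sdiff, Finset.mem_insert, Finset.mem_union]
      constructor
      · rintro ⟨h1 | h2 | h3, hy⟩
        · exact absurd (Or.inl (h1 ▸ hxA)) hy
        · exact absurd (Or.inr h2) hy
        · exact h3
      · intro hy
        exact ⟨Or.inr (Or.inr hy), fun h => h.elim (hTA y hy).1 (hTA y hy).2⟩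
    · rw [Finset.card_insert_of_notMem, Finset.card_union_of_disjoint]
      · rw [hS, hTcard]; omega
      · exact Finset.disjoint_left.mpr (fun y hy hyT => (hTA y hyT).2 hy)
      · simp only [Finset.mem_union]; rintro (h | h)
        · exact hxS h
        · exact hxT h
    · refine ⟨x, Finset.mem_insert_self _ _, ?_⟩
      rw [hA, Finset.mem_filter] at hxA; exact hxA.2
    · intro y hy; exact Finset.mem_insert_of_mem (Finset.mem_union_left _ hy)
  calc ((A \ S).card * (R.card.choose (k - ℓ - 1)))
      = ((A \ S) ×ˢ R.powersetCard (k - ℓ - 1)).card := by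
        rw [Finset.card_product, Finset.card_powersetCard]
  _ ≤ _ := by
      apply Finset.card_le_card_of_injOn (fun q => insert q.1 (S ∪ q.2))
      · rintro ⟨x, T⟩ hq
        rw [Finset.mem_coe, Finset.mem_product] at hq
        obtain ⟨h1, h2, h3, h4, h5⟩ := hkey x hq.1 T hq.2
        simp only [Finset.mem_coe, Finset.mem_filter, Finset.mem_univ, true_and]
        exact ⟨⟨h3, h4⟩, h5⟩
      · rintro ⟨x, T⟩ hq ⟨x', T'⟩ hq' he
        rw [Finset.mem_coe, Finset.mem_product] at hq hq'
        obtain ⟨h1, h2, -, -, -⟩ := hkey x hq.1 T hq.2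
        obtain ⟨h1', h2', -, -, -⟩ := hkey x' hq'.1 T' hq'.2
        simp only at he
        rw [he] at h1 h2
        have hx : x = x' := by
          have := h1.symm.trans h1'
          have hxx := Finset.mem_singleton.mp (this ▸ Finset.mem_singleton_self x')
          exact hxx.symm ▸ rfl
        have hT : T = T' := h2.symm.trans h2'
        simp [hx, hT]

lemma afin_card {n a : ℕ} (han : a ≤ n) :
    (Finset.univ.filter (fun x : Fin n => (x : ℕ) < a)).card = a := by
  have h : Finset.univ.filter (fun x : Fin n => (x : ℕ) < a)
      = Finset.map (Fin.castLEEmb han) Finset.univ := by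
    ext x
    simp only [Finset.mem_filter, Finset.mem_univ, true_and, Finset.mem_map]
    constructor
    · intro hx
      refine ⟨⟨(x : ℕ), hx⟩, ?_⟩
      simp [Fin.castLEEmb, Fin.castLE]
    · rintro ⟨y, rfl⟩
      simpa [Fin.castLEEmb, Fin.castLE] using y.isLt
  rw [h, Finset.card_map, Finset.card_univ, Fintype.card_fin]

lemma degree_main (k ℓ : ℕ) (hℓ2 : 2 ≤ ℓ) (hℓk : ℓ < k) (α : ℝ) (hα0 : 0 < α)
    (hα1 : α < 1 / (12 * (k : ℝ) ^ 2)) :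
    ∀ n : ℕ, (2 * (k:ℝ)^2 ≤ α * n) → ((24 * k^2 + 64 : ℕ) ≤ n) →
    ∀ S : Finset (Fin n), S.card = ℓ →
      α * ((n.choose (k - ℓ) : ℝ)) ≤
        ((((Finset.univ.filter (fun e : Finset (Fin n) =>
          e.card = k ∧ ∃ x ∈ e, (x : ℕ) < ⌈2 * α / ((k - ℓ : ℕ) : ℝ) * n⌉₊))).filter
            (fun e => S ⊆ e)).card : ℝ) := by
  intro n hαn hn2 S hS
  set d := k - ℓ with hddef
  have hd1 : 1 ≤ d := by omega
  have hdk : d ≤ k := by omega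
  have hk3 : 3 ≤ k := by omega
  have hkR : (3:ℝ) ≤ k := by exact_mod_cast hk3
  have hdR : (1:ℝ) ≤ (d:ℝ) := by exact_mod_cast hd1
  have hdpos : (0:ℝ) < d := by linarith
  have hdkR : (d:ℝ) ≤ k := by exact_mod_cast hdk
  have hℓkR : (ℓ:ℝ) ≤ k := by exact_mod_cast le_of_lt hℓk
  have hnR : (24 * (k:ℝ)^2 + 64) ≤ n := by exact_mod_cast hn2
  have hn0 : (0:ℝ) < n := by nlinarith
  have hαnn : (0:ℝ) ≤ α * n := by positivity
  have hsmall : 12 * (k:ℝ)^2 * (α * n) ≤ n := by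
    have hk2pos : (0:ℝ) < 12 * (k:ℝ)^2 := by positivity
    rw [div_eq_mul_inv] at hα1
    have h := mul_le_mul_of_nonneg_right hα1.le hn0.le
    calc 12 * (k:ℝ)^2 * (α * n) = (12*(k:ℝ)^2) * (α * n) := by ring
    _ ≤ (12*(k:ℝ)^2) * ((1 * (12*(k:ℝ)^2)⁻¹) * n) := by
        apply mul_le_mul_of_nonneg_left _ (by positivity)
        calc α * (n:ℝ) = α * n := rfl
        _ ≤ 1 * (12*(k:ℝ)^2)⁻¹ * n := h
    _ = n := by field_simp
  set a := ⌈2 * α / (d : ℝ) * n⌉₊ with hadef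
  have haR1 : 2 * α / (d:ℝ) * n ≤ a := Nat.le_ceil _
  have haR2 : (a:ℝ) ≤ 2 * α / (d:ℝ) * n + 1 :=
    le_of_lt (Nat.ceil_lt_add_one (by positivity))
  have hA1 : 2 * (α * n) ≤ (a:ℝ) * d := by
    have h := mul_le_mul_of_nonneg_right haR1 hdpos.le
    have e : 2 * α / (d:ℝ) * n * d = 2 * (α*n) := by field_simp
    linarith [e ▸ h]
  have hA2 : (a:ℝ) * d ≤ 2 * (α * n) + d := by
    have h := mul_le_mul_of_nonneg_right haR2 hdpos.le
    have e : (2 * α / (d:ℝ) * n + 1) * d = 2 * (α*n) + d := by field_simp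
    linarith [e ▸ h]
  have ha0 : (0:ℝ) ≤ a := Nat.cast_nonneg a
  have hkpos : (0:ℝ) < k := by linarith
  have haub : (a:ℝ) ≤ 2 * (α*n) + d := by
    have h1 : (a:ℝ) ≤ (a:ℝ) * d := le_mul_of_one_le_right ha0 hdR
    linarith
  have ha4kR : 4 * (k:ℝ) ≤ a := by
    have h1 : (a:ℝ) * d ≤ (a:ℝ) * k := mul_le_mul_of_nonneg_left hdkR ha0
    have h2 : 4 * (k:ℝ) * k ≤ (a:ℝ) * k := by nlinarith
    exact le_of_mul_le_mul_right h2 hkpos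
  have ha4k : 4 * k ≤ a := by exact_mod_cast ha4kR
  have hk2 : (k:ℝ) ≤ (k:ℝ)^2 := by nlinarith [hkR, sq_nonneg ((k:ℝ)-3)]
  have h108 : 108 * (α*n) ≤ n := by
    have hx : (0:ℝ) ≤ (12*(k:ℝ)^2 - 108) * (α*n) :=
      mul_nonneg (by nlinarith [hkR, sq_nonneg ((k:ℝ)-3)]) hαnn
    linarith [hsmall, hx]
  have halnR : (a:ℝ) + ℓ + d + 2 ≤ n := by linarith
  have haln : a + ℓ + d + 2 ≤ n := by exact_mod_cast halnR
  set M' := n - ℓ - a with hM'def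
  have hC2 : d - 1 ≤ M' := by omega
  have hC3 : M' ≤ n - 1 := by omega
  have hC4 : 3 * ((d-1) * ((n-1) - M' + (d-1))) ≤ n - 1 := by
    have e1 : (n-1) - M' + (d-1) = a + ℓ + d - 2 := by omega
    rw [e1]
    have e2 : (d-1) * (a + ℓ + d - 2) ≤ k * (a + 2*k) :=
      Nat.mul_le_mul (by omega) (by omega)
    have e3 : 3 * (k * (a + 2*k)) ≤ n - 1 := by
      have er : 3 * (k:ℝ) * (a + 2*k) ≤ (n:ℝ) - 1 := by
        have hx : (0:ℝ) ≤ (12*(k:ℝ) - 36) * (k * (α*n)) :=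
          mul_nonneg (by linarith) (mul_nonneg (by linarith) hαnn)
        have h36 : 36 * ((k:ℝ) * (α*n)) ≤ n := by nlinarith [hsmall]
        have hka : (k:ℝ) * a ≤ k * (2*(α*n) + d) :=
          mul_le_mul_of_nonneg_left haub hkpos.le
        have hkd : (k:ℝ) * d ≤ (k:ℝ)^2 := by nlinarith
        nlinarith [h36, hka, hkd, hnR, hk2]
      have : ((3 * (k * (a + 2*k)) : ℕ) : ℝ) ≤ ((n - 1 : ℕ) : ℝ) := by
        push_cast [Nat.cast_sub (show 1 ≤ n by omega)]
        linarith
      exact_mod_cast this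
    omega
  have hn1pos : 0 < n - 1 := by omega
  have key := choose_compare hC2 hC3 hC4 hn1pos
  -- identity n * C(n-1,d-1) = C(n,d) * d
  have hid : n * (n-1).choose (d-1) = n.choose d * d := by
    have h := Nat.add_one_mul_choose_eq (n-1) (d-1)
    have e1 : n - 1 + 1 = n := by omega
    have e2 : d - 1 + 1 = d := by omega
    rw [e1, e2] at h
    exact h
  -- real inequality
  have hmain : α * (n.choose d : ℝ) ≤ ((a - ℓ : ℕ) : ℝ) * ((M'.choose (d-1) : ℕ) : ℝ) := by
    have hCnn : (0:ℝ) ≤ (M'.choose (d-1) : ℝ) := Nat.cast_nonneg _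
    have hidR : (n:ℝ) * ((n-1).choose (d-1) : ℝ) = (n.choose d : ℝ) * d := by
      exact_mod_cast hid
    have hcast : ((a - ℓ : ℕ) : ℝ) = (a:ℝ) - ℓ := by
      rw [Nat.cast_sub (by omega : ℓ ≤ a)]
    have hcoef : 3 * (α * n) ≤ ((a:ℝ) - ℓ) * (2 * d) := by
      have hld : (ℓ:ℝ) * d ≤ (k:ℝ)^2 := by nlinarith
      nlinarith [hA1, hαn]
    -- multiply target by 2d
    have h2d : (0:ℝ) < 2 * d := by linarith
    rw [← mul_le_mul_iff_of_pos_right h2d]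
    calc α * (n.choose d : ℝ) * (2*d) = (α * n) * (2 * ((n-1).choose (d-1) : ℝ)) := by
          rw [show α * (n.choose d : ℝ) * (2*(d:ℝ)) = 2 * α * ((n.choose d : ℝ) * d) by ring,
            ← hidR]
          ring
    _ ≤ (α * n) * (3 * (M'.choose (d-1) : ℝ)) := by
          apply mul_le_mul_of_nonneg_left key hαnn
    _ = (3 * (α * n)) * (M'.choose (d-1) : ℝ) := by ring
    _ ≤ (((a:ℝ) - ℓ) * (2*d)) * (M'.choose (d-1) : ℝ) :=
          mul_le_mul_of_nonneg_right hcoef hCnn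
    _ = ((a - ℓ : ℕ) : ℝ) * (M'.choose (d-1) : ℝ) * (2*d) := by rw [hcast]; ring
  -- Nat comparison with the actual count
  set A : Finset (Fin n) := Finset.univ.filter (fun x : Fin n => (x : ℕ) < a) with hA
  have hAcard : A.card = a := afin_card (by omega)
  have hAS : a - ℓ ≤ (A \ S).card := by
    have := Finset.le_card_sdiff S A
    omega
  have hR : n - a - ℓ ≤ (Finset.univ \ (A ∪ S)).card := by
    have h1 : (Finset.univ \ (A ∪ S)).card = n - (A ∪ S).card := by
      rw [Finset.card_sdiff_of_subset (Finset.subset_univ _), Finset.card_univ, Fintype.card_fin]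
    have h2 : (A ∪ S).card ≤ a + ℓ := by
      have := Finset.card_union_le A S
      omega
    omega
  have hnat : (a - ℓ) * (M'.choose (d-1)) ≤
      ((A \ S).card * ((Finset.univ \ (A ∪ S)).card.choose (d - 1))) := by
    apply Nat.mul_le_mul hAS
    apply Nat.choose_le_choose
    omega
  have hfinal := le_trans hnat (degree_count hℓk S hS)
  calc α * (n.choose d : ℝ) ≤ ((a - ℓ : ℕ) : ℝ) * ((M'.choose (d-1) : ℕ) : ℝ) := hmain
  _ = (((a - ℓ) * (M'.choose (d-1)) : ℕ) : ℝ) := by push_cast; ring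
  _ ≤ _ := by exact_mod_cast hfinal

lemma bad_count {n k ℓ a : ℕ} (hd : 0 < k - ℓ) (hdn : (k - ℓ) ∣ n) (hkn : k ≤ n)
    (hn0 : 0 < n) (han : a ≤ n) (f : Fin n → Fin n) (hf : Function.Bijective f) :
    n / (k - ℓ) - a * (k / (k - ℓ) + 1) ≤
      ((Finset.range (n / (k - ℓ))).filter (fun j =>
        (Finset.range k).image (fun i => f ⟨(j * (k - ℓ) + i) % n, Nat.mod_lt _ hn0⟩) ∉
          (Finset.univ.filter (fun e : Finset (Fin n) =>
            e.card = k ∧ ∃ x ∈ e, (x : ℕ) < a)))).card := by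
  classical
  set d := k - ℓ with hddef
  set wf : ℕ → Finset (Fin n) :=
    fun j => (Finset.range k).image (fun i => f ⟨(j * d + i) % n, Nat.mod_lt _ hn0⟩) with hwf
  set H : Finset (Finset (Fin n)) := Finset.univ.filter (fun e : Finset (Fin n) =>
            e.card = k ∧ ∃ x ∈ e, (x : ℕ) < a) with hH
  show n / d - a * (k / d + 1) ≤
    ((Finset.range (n / d)).filter (fun j => wf j ∉ H)).card
  have hsplit := Finset.card_filter_add_card_filter_not
    (s := Finset.range (n / d)) (p := fun j => wf j ∈ H)
  have hgood : ((Finset.range (n / d)).filter (fun j => wf j ∈ H)).card ≤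
      a * (k / d + 1) := by
    set Afin : Finset (Fin n) := Finset.univ.filter (fun x : Fin n => (x : ℕ) < a)
      with hAfin
    have hsub : (Finset.range (n / d)).filter (fun j => wf j ∈ H) ⊆
        Afin.biUnion (fun z => (Finset.range (n / d)).filter
          (fun j => ∃ i < k, f ⟨(j * d + i) % n, Nat.mod_lt _ hn0⟩ = z)) := by
      intro j hj
      rw [Finset.mem_filter] at hj
      obtain ⟨hjr, hjH⟩ := hj
      rw [hH, Finset.mem_filter] at hjH
      obtain ⟨-, -, x, hx, hxa⟩ := hjH
      rw [hwf, Finset.mem_image] at hx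
      obtain ⟨i, hi, hix⟩ := hx
      rw [Finset.mem_range] at hi
      rw [Finset.mem_biUnion]
      refine ⟨x, ?_, ?_⟩
      · rw [hAfin, Finset.mem_filter]; exact ⟨Finset.mem_univ _, hxa⟩
      · rw [Finset.mem_filter]; exact ⟨hjr, i, hi, hix⟩
    calc ((Finset.range (n / d)).filter (fun j => wf j ∈ H)).card
        ≤ _ := Finset.card_le_card hsub
    _ ≤ ∑ z ∈ Afin, ((Finset.range (n / d)).filter
          (fun j => ∃ i < k, f ⟨(j * d + i) % n, Nat.mod_lt _ hn0⟩ = z)).card :=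
        Finset.card_biUnion_le
    _ ≤ ∑ _z ∈ Afin, (k / d + 1) := by
        apply Finset.sum_le_sum
        intro z _
        set e := Equiv.ofBijective f hf with he
        have hpred : ∀ j : ℕ, (∃ i < k, f ⟨(j * d + i) % n, Nat.mod_lt _ hn0⟩ = z) ↔
            (∃ i < k, (j * d + i) % n = ((e.symm z : Fin n) : ℕ)) := by
          intro j
          constructor
          · rintro ⟨i, hi, hiz⟩
            refine ⟨i, hi, ?_⟩
            have : (⟨(j * d + i) % n, Nat.mod_lt _ hn0⟩ : Fin n) = e.symm z := by
              apply e.injective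
              rw [Equiv.apply_symm_apply]
              exact hiz
            exact congrArg Fin.val this
          · rintro ⟨i, hi, hiz⟩
            refine ⟨i, hi, ?_⟩
            have : (⟨(j * d + i) % n, Nat.mod_lt _ hn0⟩ : Fin n) = e.symm z :=
              Fin.ext hiz
            rw [this]
            exact e.apply_symm_apply z
        rw [Finset.filter_congr (fun j _ => hpred j)]
        exact mult_bound hd hdn hkn
    _ = a * (k / d + 1) := by
        rw [Finset.sum_const, afin_card han, smul_eq_mul]
  have hcard : (Finset.range (n / d)).card = n / d := Finset.card_range _
  omega

lemma prob_bound (k ℓ n : ℕ) (H : Finset (Finset (Fin n))) (p : ℝ≥0∞) (m : ℕ)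
    (hd : 0 < k - ℓ) (hdn : (k - ℓ) ∣ n) (hk : 0 < k) (hkn : k < n) (hn0 : 0 < n)
    (hm : ∀ f : Fin n → Fin n, Function.Bijective f →
      m ≤ ((Finset.range (n / (k - ℓ))).filter (fun j =>
        (Finset.range k).image
          (fun i => f ⟨(j * (k - ℓ) + i) % n, Nat.mod_lt _ hn0⟩) ∉ H)).card) :
    randomHypergraph n k p {ω | HasHamiltonCycle k ℓ n (H ∪ edgeSet ω)} ≤
      ((n ^ n : ℕ) : ℝ≥0∞) * (min p 1) ^ m := by
  classical
  set d := k - ℓ with hddef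
  -- windows
  set wf : (Fin n → Fin n) → ℕ → Finset (Fin n) :=
    fun f j => (Finset.range k).image (fun i => f ⟨(j * d + i) % n, Nat.mod_lt _ hn0⟩)
    with hwf
  set Tf : (Fin n → Fin n) → Finset {s : Finset (Fin n) // s.card = k} :=
    fun f => Finset.univ.filter (fun s => s.val ∈
      ((Finset.range (n / d)).filter (fun j => wf f j ∉ H)).image (wf f)) with hTf
  set F : (Fin n → Fin n) → Set ({s : Finset (Fin n) // s.card = k} → Bool) :=
    fun f => {ω | Function.Bijective f ∧ ∀ s ∈ Tf f, ω s = true} with hF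
  -- arcs in Fin n and their injectivity facts
  have hwf_card : ∀ f : Fin n → Fin n, Function.Injective f → ∀ j, (wf f j).card = k := by
    intro f hf j
    rw [hwf]
    rw [Finset.card_image_of_injOn, Finset.card_range]
    intro i hi i' hi' he
    rw [Finset.coe_range, Set.mem_Iio] at hi hi'
    have h2 : ((j * d + i) % n : ℕ) = (j * d + i') % n := by
      have := hf he
      exact congrArg Fin.val this
    have h3 : i % n = i' % n := Nat.ModEq.add_left_cancel' (j * d) h2
    rwa [Nat.mod_eq_of_lt (lt_trans hi hkn), Nat.mod_eq_of_lt (lt_trans hi' hkn)] at h3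
  have hwf_inj : ∀ f : Fin n → Fin n, Function.Injective f →
      ∀ j ∈ Finset.range (n / d), ∀ j' ∈ Finset.range (n / d),
        wf f j = wf f j' → j = j' := by
    intro f hf j hj j' hj' he
    rw [Finset.mem_range] at hj hj'
    apply arc_inj hd hdn hk hkn hj hj'
    have e2 : ∀ jj : ℕ, wf f jj = Finset.image f
        ((Finset.range k).image (fun i => (⟨(jj * d + i) % n, Nat.mod_lt _ hn0⟩ : Fin n))) := by
      intro jj; rw [hwf, Finset.image_image]; rfl
    rw [e2 j, e2 j'] at he
    have e3 := Finset.image_injective hf he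
    have e4 := congrArg (Finset.image Fin.val) e3
    rw [Finset.image_image, Finset.image_image] at e4
    exact e4
  -- covering
  have hcover : {ω | HasHamiltonCycle k ℓ n (H ∪ edgeSet ω)} ⊆ ⋃ f : Fin n → Fin n, F f := by
    intro ω hω
    obtain ⟨hdvd, v, hinj, himg, hedge⟩ := hω
    set f : Fin n → Fin n := fun i => v i.val with hfdef
    have hfinj : Function.Injective f := by
      intro i i' he
      have : (i : ℕ) ∈ (Finset.range n : Finset ℕ) := Finset.mem_range.mpr i.isLt
      have h2 : (i' : ℕ) ∈ (Finset.range n : Finset ℕ) := Finset.mem_range.mpr i'.isLt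
      have := hinj (Finset.mem_coe.mpr this) (Finset.mem_coe.mpr h2) he
      exact Fin.ext this
    have hfbij : Function.Bijective f := Finite.injective_iff_bijective.mp hfinj
    refine Set.mem_iUnion.mpr ⟨f, hfbij, ?_⟩
    intro s hs
    rw [hTf] at hs
    simp only [Finset.mem_filter, Finset.mem_univ, true_and, Finset.mem_image] at hs
    obtain ⟨j, hj, hjs⟩ := hs
    obtain ⟨hjlt, hjH⟩ := hj
    rw [Finset.mem_range] at hjlt
    have hwindow : wf f j = (Finset.range k).image (fun i => v ((j * d + i) % n)) := rfl
    have hmem : wf f j ∈ H ∪ edgeSet ω := by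
      rw [hwindow]; exact hedge j hjlt
    rw [Finset.mem_union] at hmem
    rcases hmem with h | h
    · exact absurd h hjH
    · rw [edgeSet, Finset.mem_image] at h
      obtain ⟨t, ht, htv⟩ := h
      rw [Finset.mem_filter] at ht
      have : t = s := Subtype.ext (htv.trans hjs)
      exact this ▸ ht.2
  -- measure bound on each F f
  have hFm : ∀ f : Fin n → Fin n, randomHypergraph n k p (F f) ≤ (min p 1) ^ m := by
    intro f
    by_cases hfbij : Function.Bijective f
    · have hsub : F f ⊆ {ω | ∀ s ∈ Tf f, ω s = true} := fun ω hω => hω.2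
      calc randomHypergraph n k p (F f) ≤
          randomHypergraph n k p {ω | ∀ s ∈ Tf f, ω s = true} := measure_mono hsub
      _ = (min p 1) ^ (Tf f).card := cylinder_measure p (Tf f)
      _ ≤ (min p 1) ^ m := by
          apply pow_le_pow_right_of_le_one' (min_le_right _ _)
          have h1 := hm f hfbij
          set B := (Finset.range (n / d)).filter (fun j => wf f j ∉ H) with hB
          have hBcard : B.card ≤ (Tf f).card := by
            have him : B.card = (B.image (wf f)).card := by
              rw [Finset.card_image_of_injOn]
              intro j hj j' hj' he
              rw [hB, Finset.mem_coe, Finset.mem_filter] at hj hj'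
              exact hwf_inj f hfbij.injective j hj.1 j' hj'.1 he
            rw [him]
            apply Finset.card_le_card_of_surjOn (Subtype.val)
            intro x hx
            rw [Finset.mem_coe, Finset.mem_image] at hx
            obtain ⟨j, hj, hjx⟩ := hx
            have hxcard : x.card = k := by
              rw [← hjx]; exact hwf_card f hfbij.injective j
            have hmemTf : (⟨x, hxcard⟩ : {s : Finset (Fin n) // s.card = k}) ∈ Tf f := by
              rw [hTf]
              simp only [Finset.mem_filter, Finset.mem_univ, true_and, Finset.mem_image]
              exact ⟨j, by rw [hB] at hj; simpa using hj, hjx⟩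
            exact Set.mem_image_of_mem _ (Finset.mem_coe.mpr hmemTf)
          exact le_trans h1 hBcard
    · have : F f = ∅ := by
        ext ω; simp only [hF, Set.mem_setOf_eq, Set.mem_empty_iff_false, iff_false]
        rintro ⟨h, -⟩; exact hfbij h
      rw [this]; simp
  -- union bound
  calc randomHypergraph n k p {ω | HasHamiltonCycle k ℓ n (H ∪ edgeSet ω)}
      ≤ randomHypergraph n k p (⋃ f : Fin n → Fin n, F f) := measure_mono hcover
  _ ≤ ∑' f : Fin n → Fin n, randomHypergraph n k p (F f) := measure_iUnion_le F
  _ = ∑ f : Fin n → Fin n, randomHypergraph n k p (F f) := tsum_fintype _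
  _ ≤ ∑ _f : Fin n → Fin n, (min p 1) ^ m := Finset.sum_le_sum (fun f _ => hFm f)
  _ = (Fintype.card (Fin n → Fin n)) • ((min p 1) ^ m) := by
      rw [Finset.sum_const, Finset.card_univ]
  _ = ((n ^ n : ℕ) : ℝ≥0∞) * (min p 1) ^ m := by
      rw [nsmul_eq_mul]
      congr 1
      simp [Fintype.card_fun]

lemma exponent_ineq {α c kk dd nn Y M : ℝ} (hkR : 3 ≤ kk) (hdR : 1 ≤ dd) (hdkR : dd ≤ kk)
    (hα0 : 0 < α) (hαk : α*kk ≤ 1/36) (hαn : 2*kk^2 ≤ α*nn)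
    (hc8 : 8*(α*kk) ≤ c) (hY0 : 0 ≤ Y) (h2Y : 2*Y ≤ nn)
    (hYd : Y*dd ≤ 4*(kk*(α*nn)) + 2*(kk*dd)) (hY1 : Y ≤ Y*dd)
    (hdpos : 0 < dd) (hdm : dd*M = nn - Y) :
    nn + (-dd - c)*M ≤ -1 := by
  have hkpos : 0 < kk := by linarith
  have hkan : 2*kk^3 ≤ kk*(α*nn) := by nlinarith
  have hkd : kk*dd ≤ kk^2 := by nlinarith
  have hpoly : 22*kk^2 + 9*kk ≤ 56*kk^3 := by nlinarith
  have hP1 : 0 ≤ (c - 8*(α*kk))*(nn - Y) := mul_nonneg (by linarith) (by linarith)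
  have hP2 : 0 ≤ (2/9 - 8*(α*kk))*Y := mul_nonneg (by linarith) hY0
  have hstep1' : (Y+1)*dd ≤ c*(nn - Y) := by nlinarith [hP1, hP2, hYd, hY1, hkan, hkd, hpoly]
  have hstep2 : Y + 1 ≤ c*M := by
    have h1 : (Y+1)*dd ≤ (c*M)*dd := by
      calc (Y+1)*dd ≤ c*(nn - Y) := hstep1'
      _ = (c*M)*dd := by rw [← hdm]; ring
    exact le_of_mul_le_mul_right h1 hdpos
  nlinarith [hdm, hstep2]


end Aux

/-- Optimality of the main theorem. Fix `2 ≤ ℓ < k`. For every `0 < α < 1/(12k²)`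
there exists (for each sufficiently large `n`) a `k`-graph `H` on `n` vertices
with minimum `ℓ`-degree `δ_ℓ(H) ≥ α·C(n, k-ℓ)` such that for every
`c > ℓ/⌊1/(4αk)⌋`, if `p < n^{-(k-ℓ)-c}` then with high probability the randomly
perturbed `k`-graph `H⁺_p` contains no Hamilton `ℓ`-cycle. -/
theorem perturbed_optimality (k ℓ : ℕ) (hℓ : 2 ≤ ℓ) (hℓk : ℓ < k)
    (α : ℝ) (hα0 : 0 < α) (hα1 : α < 1 / (12 * (k : ℝ) ^ 2)) :
    ∃ N : ℕ, ∃ H : (n : ℕ) → Finset (Finset (Fin n)),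
      (∀ n ≥ N,
        (∀ e ∈ H n, e.card = k) ∧
        (∀ S : Finset (Fin n), S.card = ℓ →
          α * ((n.choose (k - ℓ) : ℝ)) ≤ (((H n).filter (fun e => S ⊆ e)).card : ℝ))) ∧
      ∀ c : ℝ, c > (ℓ : ℝ) / (⌊1 / (4 * α * (k : ℝ))⌋₊ : ℝ) →
        ∀ p : ℕ → ℝ, (∀ n : ℕ, 1 ≤ n → 0 ≤ p n ∧
            p n < (n : ℝ) ^ (-((k : ℝ) - (ℓ : ℝ)) - c)) →
          Tendsto (fun n =>
              randomHypergraph n k (ENNReal.ofReal (p n))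
                {ω | HasHamiltonCycle k ℓ n (H n ∪ edgeSet ω)})
            atTop (nhds 0) := by
  classical
  have hd' : 0 < k - ℓ := by omega
  have hk3 : 3 ≤ k := by omega
  have hkR : (3:ℝ) ≤ k := by exact_mod_cast hk3
  have hkpos : (0:ℝ) < k := by linarith
  have hdR : (1:ℝ) ≤ ((k - ℓ : ℕ):ℝ) := by exact_mod_cast hd'
  have hdpos : (0:ℝ) < ((k - ℓ : ℕ):ℝ) := by linarith
  have hdkR : ((k - ℓ : ℕ):ℝ) ≤ k := by exact_mod_cast (show k - ℓ ≤ k by omega)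
  have hℓR : (2:ℝ) ≤ (ℓ:ℝ) := by exact_mod_cast hℓ
  have hk2pos : (0:ℝ) < 12 * (k:ℝ)^2 := by positivity
  have hαk2 : α * (12 * (k:ℝ)^2) < 1 := (lt_div_iff₀ hk2pos).mp hα1
  have hαk : α * k ≤ 1/36 := by
    have hx : (0:ℝ) ≤ (12*(k:ℝ) - 36) * (α * k) :=
      mul_nonneg (by linarith) (by positivity)
    nlinarith
  set N : ℕ := ⌈2*(k:ℝ)^2/α⌉₊ + 24*k^2 + 64 with hNdef
  have hNn : ∀ n : ℕ, N ≤ n → (2 * (k:ℝ)^2 ≤ α * n) ∧ ((24 * k^2 + 64 : ℕ) ≤ n) := by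
    intro n hn
    constructor
    · have h1 : (⌈2*(k:ℝ)^2/α⌉₊ : ℕ) ≤ n := by omega
      have h2 : 2*(k:ℝ)^2/α ≤ (⌈2*(k:ℝ)^2/α⌉₊ : ℝ) := Nat.le_ceil _
      have h3 : ((⌈2*(k:ℝ)^2/α⌉₊ : ℕ) : ℝ) ≤ n := by exact_mod_cast h1
      have h4 : 2*(k:ℝ)^2/α ≤ n := le_trans h2 h3
      rw [div_le_iff₀ hα0] at h4
      linarith
    · omega
  refine ⟨N, fun n => Finset.univ.filter (fun e : Finset (Fin n) =>
      e.card = k ∧ ∃ x ∈ e, (x : ℕ) < ⌈2 * α / ((k - ℓ : ℕ) : ℝ) * n⌉₊), ?_, ?_⟩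
  · intro n hn
    refine ⟨?_, ?_⟩
    · intro e he
      simp only [Finset.mem_filter] at he
      exact he.2.1
    · intro S hS
      exact degree_main k ℓ hℓ hℓk α hα0 hα1 n (hNn n hn).1 (hNn n hn).2 S hS
  · intro c hc p hp
    have h4αk1 : 0 < 4*α*(k:ℝ) := by positivity
    have h4αk : 4*α*(k:ℝ) ≤ 1 := by linarith
    have hfl1 : (1:ℝ) ≤ 1/(4*α*(k:ℝ)) := by
      rw [le_div_iff₀ h4αk1]; linarith
    have hflpos : 0 < ⌊1/(4*α*(k:ℝ))⌋₊ := by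
      have := Nat.le_floor (α := ℝ) (n := 1) (by exact_mod_cast hfl1)
      omega
    have hflposR : (0:ℝ) < (⌊1/(4*α*(k:ℝ))⌋₊ : ℝ) := by exact_mod_cast hflpos
    have hflR : (⌊1/(4*α*(k:ℝ))⌋₊ : ℝ) ≤ 1/(4*α*(k:ℝ)) := Nat.floor_le (by positivity)
    have hthr : 4*α*(k:ℝ)*ℓ ≤ (ℓ:ℝ)/((⌊1/(4*α*(k:ℝ))⌋₊ : ℝ)) := by
      have h1 : (ℓ:ℝ)/(1/(4*α*(k:ℝ))) ≤ (ℓ:ℝ)/((⌊1/(4*α*(k:ℝ))⌋₊ : ℝ)) :=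
        div_le_div_of_nonneg_left (by linarith) hflposR hflR
      have h2 : (ℓ:ℝ)/(1/(4*α*(k:ℝ))) = 4*α*(k:ℝ)*ℓ := by
        rw [div_div_eq_mul_div, div_one]; ring
      linarith
    have hc8 : 8*(α*(k:ℝ)) ≤ c := by
      have h2 : 8*(α*(k:ℝ)) ≤ 4*α*(k:ℝ)*ℓ := by nlinarith
      linarith
    have hzero : Tendsto (fun _ : ℕ => (0:ℝ≥0∞)) atTop (nhds 0) := tendsto_const_nhds
    have hupper : Tendsto (fun n : ℕ => ENNReal.ofReal ((n:ℝ)^(-1:ℝ))) atTop (nhds 0) := by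
      have h1 : Tendsto (fun n : ℕ => ((n:ℝ))^(-1:ℝ)) atTop (nhds 0) := by
        have := tendsto_rpow_neg_atTop (show (0:ℝ) < 1 by norm_num)
        exact this.comp tendsto_natCast_atTop_atTop
      have h2 := ENNReal.tendsto_ofReal h1
      simpa using h2
    apply tendsto_of_tendsto_of_tendsto_of_le_of_le' hzero hupper
    · exact Filter.Eventually.of_forall (fun n => zero_le)
    · rw [Filter.eventually_atTop]
      refine ⟨N + 1, fun n hn => ?_⟩
      have hNle : N ≤ n := by omega
      obtain ⟨hαn, hn2⟩ := hNn n hNle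
      have hnR : (24*(k:ℝ)^2 + 64) ≤ n := by exact_mod_cast hn2
      have hn0 : 0 < n := by omega
      have hkk2 : k ≤ k^2 := Nat.le_self_pow (by norm_num) k
      have hkn : k < n := by omega
      have hk0 : 0 < k := by omega
      have hn0R : (0:ℝ) < n := by exact_mod_cast hn0
      have hn1R : (1:ℝ) ≤ n := by exact_mod_cast hn0
      have hαnn : (0:ℝ) ≤ α*n := by positivity
      have hk2R : 24*(k:ℝ)^2 ≤ n := by linarith
      have hkk2R : (k:ℝ) ≤ (k:ℝ)^2 := by nlinarith
      have hsmall : 12*(k:ℝ)^2*(α*n) ≤ n := by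
        have h := mul_le_mul_of_nonneg_right hαk2.le hn0R.le
        calc 12*(k:ℝ)^2*(α*n) = (α*(12*(k:ℝ)^2))*(n:ℝ) := by ring
        _ ≤ 1*(n:ℝ) := h
        _ = (n:ℝ) := by ring
      set a := ⌈2 * α / ((k - ℓ : ℕ) : ℝ) * n⌉₊ with hadef
      have haR2 : (a:ℝ) ≤ 2*α/((k-ℓ:ℕ):ℝ)*n + 1 :=
        le_of_lt (Nat.ceil_lt_add_one (by positivity))
      have hA2 : (a:ℝ)*((k-ℓ:ℕ):ℝ) ≤ 2*(α*n) + ((k-ℓ:ℕ):ℝ) := by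
        have h := mul_le_mul_of_nonneg_right haR2 hdpos.le
        have e : (2*α/((k-ℓ:ℕ):ℝ)*n + 1)*((k-ℓ:ℕ):ℝ) = 2*(α*n) + ((k-ℓ:ℕ):ℝ) := by
          field_simp
        linarith [e ▸ h]
      have ha0 : (0:ℝ) ≤ a := Nat.cast_nonneg a
      have haub : (a:ℝ) ≤ 2*(α*n) + k := by
        have h1 : (a:ℝ) ≤ (a:ℝ)*((k-ℓ:ℕ):ℝ) := le_mul_of_one_le_right ha0 hdR
        linarith
      have h108 : 108*(α*n) ≤ (n:ℝ) := by
        have hx : (0:ℝ) ≤ (12*(k:ℝ)^2 - 108)*(α*n) :=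
          mul_nonneg (by nlinarith) hαnn
        linarith
      have han : a ≤ n := by
        have hr : (a:ℝ) ≤ (n:ℝ) := by linarith
        exact_mod_cast hr
      by_cases hdvd : (k - ℓ) ∣ n
      · -- main case
        set q : ℕ := k/(k-ℓ) + 1 with hqdef
        set m : ℕ := n/(k-ℓ) - a*q with hmdef
        have hqd : q*(k-ℓ) ≤ 2*k := by
          have h1 := Nat.div_mul_le_self k (k-ℓ)
          have h2 : q*(k-ℓ) = (k/(k-ℓ))*(k-ℓ) + (k-ℓ) := by rw [hqdef]; ring
          omega
        have hWd : ((a*q : ℕ):ℝ)*((k-ℓ:ℕ):ℝ) ≤ (a:ℝ)*(2*k) := by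
          have h1 : a*q*(k-ℓ) ≤ a*(2*k) := by
            calc a*q*(k-ℓ) = a*(q*(k-ℓ)) := by ring
            _ ≤ a*(2*k) := Nat.mul_le_mul_left a hqd
          exact_mod_cast h1
        set Y : ℝ := ((a*q : ℕ):ℝ)*((k-ℓ:ℕ):ℝ) with hYdef
        have hY0 : 0 ≤ Y := by positivity
        have hkd : (k:ℝ)*((k-ℓ:ℕ):ℝ) ≤ (k:ℝ)^2 := by nlinarith
        have hYd : Y*((k-ℓ:ℕ):ℝ) ≤ 4*((k:ℝ)*(α*n)) + 2*((k:ℝ)*((k-ℓ:ℕ):ℝ)) := by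
          calc Y*((k-ℓ:ℕ):ℝ) ≤ ((a:ℝ)*(2*k))*((k-ℓ:ℕ):ℝ) :=
                mul_le_mul_of_nonneg_right hWd hdpos.le
          _ = 2*(k:ℝ)*((a:ℝ)*((k-ℓ:ℕ):ℝ)) := by ring
          _ ≤ 2*(k:ℝ)*(2*(α*n) + ((k-ℓ:ℕ):ℝ)) := by
                apply mul_le_mul_of_nonneg_left hA2 (by positivity)
          _ = 4*((k:ℝ)*(α*n)) + 2*((k:ℝ)*((k-ℓ:ℕ):ℝ)) := by ring
        have hY1 : Y ≤ Y*((k-ℓ:ℕ):ℝ) := le_mul_of_one_le_right hY0 hdR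
        have hx36 : 36*((k:ℝ)*(α*n)) ≤ n := by
          have hx : (0:ℝ) ≤ (12*(k:ℝ)^2 - 36*(k:ℝ))*(α*n) :=
            mul_nonneg (by nlinarith) hαnn
          nlinarith
        have h2Y : 2*Y ≤ (n:ℝ) := by linarith
        have h2w : 2*(a*q) ≤ n/(k-ℓ) := by
          rw [Nat.le_div_iff_mul_le hd']
          have h2Y' := h2Y
          rw [hYdef] at h2Y'
          have hreal : (2:ℝ)*(((a*q:ℕ)):ℝ)*(((k-ℓ:ℕ)):ℝ) ≤ (n:ℝ) := by linarith
          exact_mod_cast hreal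
        have hwnd : a*q ≤ n/(k-ℓ) := by omega
        have hmcast : (m:ℝ) = ((n/(k-ℓ) : ℕ):ℝ) - ((a*q:ℕ):ℝ) := by
          rw [hmdef, Nat.cast_sub hwnd]
        have hNDd : ((n/(k-ℓ):ℕ):ℝ)*((k-ℓ:ℕ):ℝ) = n := by
          exact_mod_cast congrArg (Nat.cast (R := ℝ)) (Nat.div_mul_cancel hdvd)
        obtain ⟨hp0, hplt⟩ := hp n (by omega)
        have hbound := prob_bound k ℓ n
          (Finset.univ.filter (fun e : Finset (Fin n) =>
            e.card = k ∧ ∃ x ∈ e, (x : ℕ) < a))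
          (ENNReal.ofReal (p n)) m hd' hdvd hk0 hkn hn0
          (fun f hf => bad_count hd' hdvd (le_of_lt hkn) hn0 han f hf)
        refine le_trans hbound ?_
        -- numeric ENNReal chain
        have hrpos : (0:ℝ) ≤ (n:ℝ)^(-((k:ℝ)-(ℓ:ℝ))-c) := Real.rpow_nonneg hn0R.le _
        have hstep1 : (min (ENNReal.ofReal (p n)) 1)^m ≤
            ENNReal.ofReal (((n:ℝ)^(-((k:ℝ)-(ℓ:ℝ))-c))^m) := by
          rw [ENNReal.ofReal_pow hrpos]
          apply pow_le_pow_left'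
          calc min (ENNReal.ofReal (p n)) 1 ≤ ENNReal.ofReal (p n) := min_le_left _ _
          _ ≤ ENNReal.ofReal ((n:ℝ)^(-((k:ℝ)-(ℓ:ℝ))-c)) :=
              ENNReal.ofReal_le_ofReal (le_of_lt hplt)
        have hreal : ((n^n : ℕ):ℝ) * ((n:ℝ)^(-((k:ℝ)-(ℓ:ℝ))-c))^m ≤ (n:ℝ)^(-1:ℝ) := by
          have hxc : -((k:ℝ)-(ℓ:ℝ)) - c = -((k-ℓ:ℕ):ℝ) - c := by
            rw [Nat.cast_sub (le_of_lt hℓk)]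
          have hcast1 : ((n^n:ℕ):ℝ) = (n:ℝ)^(n:ℕ) := by push_cast; ring
          have e1 : (n:ℝ)^(n:ℕ) = (n:ℝ)^((n:ℕ):ℝ) := (Real.rpow_natCast _ _).symm
          have e2 : ((n:ℝ)^(-((k:ℝ)-(ℓ:ℝ))-c))^m = (n:ℝ)^((-((k:ℝ)-(ℓ:ℝ))-c)*m) := by
            rw [← Real.rpow_natCast ((n:ℝ)^(-((k:ℝ)-(ℓ:ℝ))-c)) m, ← Real.rpow_mul hn0R.le]
          rw [hcast1, e1, e2, ← Real.rpow_add hn0R]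
          apply Real.rpow_le_rpow_of_exponent_le hn1R
          rw [hxc]
          -- exponent inequality
          have hdm : ((k-ℓ:ℕ):ℝ)*(m:ℝ) = (n:ℝ) - Y := by
            rw [hmcast]
            calc ((k-ℓ:ℕ):ℝ)*(((n/(k-ℓ):ℕ):ℝ) - ((a*q:ℕ):ℝ))
                = ((n/(k-ℓ):ℕ):ℝ)*((k-ℓ:ℕ):ℝ) - ((a*q:ℕ):ℝ)*((k-ℓ:ℕ):ℝ) := by ring
            _ = (n:ℝ) - Y := by rw [hNDd, hYdef]
          exact exponent_ineq hkR hdR hdkR hα0 hαk hαn hc8 hY0 h2Y hYd hY1 hdpos hdm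
        calc ((n^n : ℕ):ℝ≥0∞) * (min (ENNReal.ofReal (p n)) 1)^m
            ≤ ((n^n : ℕ):ℝ≥0∞) * ENNReal.ofReal (((n:ℝ)^(-((k:ℝ)-(ℓ:ℝ))-c))^m) :=
              mul_le_mul_right hstep1 _
        _ = ENNReal.ofReal (((n^n:ℕ):ℝ) * ((n:ℝ)^(-((k:ℝ)-(ℓ:ℝ))-c))^m) := by
              rw [ENNReal.ofReal_mul (by positivity)]
              congr 1
              exact (ENNReal.ofReal_natCast (n^n)).symm
        _ ≤ ENNReal.ofReal ((n:ℝ)^(-1:ℝ)) := ENNReal.ofReal_le_ofReal hreal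
      · -- non-divisible case: no Hamilton cycle at all
        have hempty : {ω : {s : Finset (Fin n) // s.card = k} → Bool |
            HasHamiltonCycle k ℓ n
              ((Finset.univ.filter (fun e : Finset (Fin n) =>
                e.card = k ∧ ∃ x ∈ e, (x : ℕ) < a)) ∪ edgeSet ω)} = ∅ := by
          ext ω
          simp only [Set.mem_setOf_eq, Set.mem_empty_iff_false, iff_false]
          intro hcon
          exact hdvd hcon.1
        show randomHypergraph n k (ENNReal.ofReal (p n))
            {ω | HasHamiltonCycle k ℓ n
              ((Finset.univ.filter (fun e : Finset (Fin n) =>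
                e.card = k ∧ ∃ x ∈ e, (x : ℕ) < a)) ∪ edgeSet ω)} ≤ _
        rw [hempty, measure_empty]
        exact zero_le
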